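/- Let n ≥ 1 and let a, b, c be even integers with 0 ≤ a,b,c ≤ 2n and |a−b| ≤ c ≤ a+b. Set σ := (a+b+c)/2, x := (−a+b+c)/2, y := (a−b+c)/2, w := (a+b−c)/2, p₁ := n+a/2, p₂ := n+b/2, p₃ := n+c/2, m := n + (a+b+c−max(a,b,c))/2, and define Δ := Σ_{z = max(σ,p₁,p₂,p₃)}^{m} (−1)^{z+σ} C(z+1, σ+1)·C(x, z−p₁)·C(y, z−p₂)·C(w, z−p₃) ∈ ℤ[v,v⁻¹]. Then, with g(N,k) := 2k(N−k), the polynomial Δ is nonzero with d₊Δ = g(m+1, σ+1) + g(x, m−p₁) + g(y, m−p₂) + g(w, m−p₃), and its leading coefficient is ±1. -/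

import Mathlib

set_option maxHeartbeats 1600000


open LaurentPolynomial

/-- The balanced quantum integer `[k]` in `ℤ[v,v⁻¹]`. -/
noncomputable def qint (k : ℕ) : LaurentPolynomial ℤ :=
  ∑ i ∈ Finset.range k, LaurentPolynomial.T (2 * ((k : ℤ) - 1) - 4 * (i : ℤ))

/-- The balanced quantum factorial `[k]! = [1][2]⋯[k]`, with `[0]! = 1`. -/
noncomputable def qfact (k : ℕ) : LaurentPolynomial ℤ :=
  ∏ i ∈ Finset.range k, qint (i + 1)

/-- `g(N,k) = 2k(N−k)`. -/
def gdeg (N k : ℤ) : ℤ := 2 * k * (N - k)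

/-- `P` has maximal degree `d` with leading coefficient `1`. -/
def LTop (P : LaurentPolynomial ℤ) (d : ℤ) : Prop := (∀ e, d < e → P.coeff e = 0) ∧ P.coeff d = 1

lemma mul_apply_of' (P Q : LaurentPolynomial ℤ) (dp dq e : ℤ)
    (hp : ∀ f, dp < f → P.coeff f = 0) (hq : ∀ f, dq < f → Q.coeff f = 0) (he : dp + dq ≤ e) :
    (P * Q).coeff e = P.coeff (e - dq) * Q.coeff dq := by
  classical
  rw [AddMonoidAlgebra.coeff_mul]
  rw [Finsupp.sum]
  have h1 : ∀ a₁ ∈ P.coeff.support,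
      (Q.coeff.sum fun a₂ b₂ => if a₁ + a₂ = e then P.coeff a₁ * b₂ else 0)
        = if a₁ = e - dq then P.coeff a₁ * Q.coeff dq else 0 := by
    intro a₁ ha₁
    have ha₁le : a₁ ≤ dp := by
      by_contra h
      exact (Finsupp.mem_support_iff.mp ha₁) (hp a₁ (by omega))
    rw [Finsupp.sum]
    by_cases hcase : a₁ = e - dq
    · subst hcase
      have : ∀ a₂ ∈ Q.coeff.support, (if (e - dq) + a₂ = e then P.coeff (e-dq) * Q.coeff a₂ else 0)
          = if a₂ = dq then P.coeff (e-dq) * Q.coeff a₂ else 0 := by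
        intro a₂ _; congr 1; simp only [eq_iff_iff]; omega
      rw [Finset.sum_congr rfl this, Finset.sum_ite_eq' Q.coeff.support dq (fun a₂ => P.coeff (e-dq) * Q.coeff a₂)]
      by_cases hmem : dq ∈ Q.coeff.support
      · simp [hmem]
      · simp [hmem, Finsupp.notMem_support_iff.mp hmem]
    · rw [if_neg hcase]
      apply Finset.sum_eq_zero
      intro a₂ ha₂
      have ha₂le : a₂ ≤ dq := by
        by_contra h
        exact (Finsupp.mem_support_iff.mp ha₂) (hq a₂ (by omega))
      have : ¬ (a₁ + a₂ = e) := by omega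
      simp [this]
  rw [Finset.sum_congr rfl h1, Finset.sum_ite_eq' P.coeff.support (e - dq) (fun a₁ => P.coeff a₁ * Q.coeff dq)]
  by_cases hmem : e - dq ∈ P.coeff.support
  · simp [hmem]
  · simp [hmem, Finsupp.notMem_support_iff.mp hmem]

lemma top_qint (k : ℕ) (hk : 1 ≤ k) : LTop (qint k) (2 * ((k : ℤ) - 1)) := by
  constructor
  · intro e he
    rw [qint, AddMonoidAlgebra.coeff_sum, Finsupp.finset_sum_apply]
    apply Finset.sum_eq_zero
    intro i hi
    rw [T_apply, if_neg]
    have : (0:ℤ) ≤ (i:ℤ) := Int.ofNat_nonneg i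
    omega
  · rw [qint, AddMonoidAlgebra.coeff_sum, Finsupp.finset_sum_apply]
    have : ∀ i ∈ Finset.range k,
        (T (2 * ((k:ℤ) - 1) - 4 * (i:ℤ)) : LaurentPolynomial ℤ).coeff (2 * ((k:ℤ) - 1))
        = if i = 0 then 1 else 0 := by
      intro i hi
      rw [T_apply]
      by_cases h : i = 0
      · subst h; simp
      · rw [if_neg, if_neg h]
        have : (1:ℤ) ≤ (i:ℤ) := by exact_mod_cast Nat.one_le_iff_ne_zero.mpr h
        omega
    rw [Finset.sum_congr rfl this, Finset.sum_ite_eq' (Finset.range k) 0 (fun _ => (1:ℤ))]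
    simp [Finset.mem_range, hk]; omega

lemma ltop_mul {P Q : LaurentPolynomial ℤ} {dp dq : ℤ}
    (hP : LTop P dp) (hQ : LTop Q dq) : LTop (P * Q) (dp + dq) := by
  constructor
  · intro e he
    rw [mul_apply_of' P Q dp dq e hP.1 hQ.1 (le_of_lt he), hP.1 _ (by omega), zero_mul]
  · rw [mul_apply_of' P Q dp dq _ hP.1 hQ.1 le_rfl]
    simp only [add_sub_cancel_right, hP.2, hQ.2, one_mul]

lemma ltop_qfact (k : ℕ) : LTop (qfact k) ((k : ℤ) * ((k : ℤ) - 1)) := by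
  induction k with
  | zero =>
    constructor
    · intro e he
      rw [qfact]
      simp only [Finset.range_zero, Finset.prod_empty]
      have h1 : (1 : LaurentPolynomial ℤ).coeff e = 0 := by
        rw [← LaurentPolynomial.single_zero_one_eq_one, AddMonoidAlgebra.coeff_single, Finsupp.single_apply, if_neg]
        omega
      simpa using h1
    · rw [qfact]
      simp only [Finset.range_zero, Finset.prod_empty, Nat.cast_zero]
      rw [show ((0:ℤ) * (0 - 1)) = 0 by ring,
        ← LaurentPolynomial.single_zero_one_eq_one, AddMonoidAlgebra.coeff_single, Finsupp.single_apply, if_pos rfl]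
  | succ j ih =>
    have hfact : qfact (j + 1) = qfact j * qint (j + 1) := by
      rw [qfact, qfact, Finset.prod_range_succ]
    have hq := top_qint (j+1) (by omega)
    have := ltop_mul ih hq
    rw [← hfact] at this
    have harith : (j:ℤ) * ((j:ℤ) - 1) + 2 * (((j:ℕ)+1 : ℕ) - 1)
        = ((j+1 : ℕ):ℤ) * (((j+1:ℕ):ℤ) - 1) := by
      push_cast; ring
    rwa [harith] at this

lemma ltop_cancel {P Q : LaurentPolynomial ℤ} {dq s : ℤ}
    (hQ : LTop Q dq) (hPQ : LTop (P * Q) s) : LTop P (s - dq) := by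
  have hPne : P ≠ 0 := by
    rintro rfl
    rw [zero_mul] at hPQ
    have := hPQ.2
    simp at this
  have hsupp : P.coeff.support.Nonempty := Finsupp.support_nonempty_iff.mpr (AddMonoidAlgebra.coeff_eq_zero.not.mpr hPne)
  set dp := P.coeff.support.max' hsupp with hdp
  have hvan : ∀ e, dp < e → P.coeff e = 0 := by
    intro e he
    by_contra h
    exact absurd (P.coeff.support.le_max' e (Finsupp.mem_support_iff.mpr h)) (by omega)
  have hPdp : P.coeff dp ≠ 0 := Finsupp.mem_support_iff.mp (P.coeff.support.max'_mem hsupp)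
  have hle : dp + dq ≤ s := by
    by_contra h
    have := hPQ.1 (dp + dq) (by omega)
    rw [mul_apply_of' P Q dp dq _ hvan hQ.1 le_rfl] at this
    simp only [add_sub_cancel_right, hQ.2, mul_one] at this
    exact hPdp this
  have hvan' : ∀ e, s - dq < e → P.coeff e = 0 := fun e he => hvan e (by omega)
  refine ⟨hvan', ?_⟩
  have := hPQ.2
  rw [mul_apply_of' P Q (s - dq) dq s hvan' hQ.1 (by omega), hQ.2, mul_one] at this
  exact this

lemma C_ltop (C : ℤ → ℤ → LaurentPolynomial ℤ)
    (hC : ∀ N k : ℤ, 0 ≤ k → k ≤ N →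
      C N k * qfact k.toNat * qfact (N - k).toNat = qfact N.toNat)
    (N k : ℤ) (hk : 0 ≤ k) (hkN : k ≤ N) : LTop (C N k) (gdeg N k) := by
  have hN : (0:ℤ) ≤ N := le_trans hk hkN
  have h1 := ltop_qfact k.toNat
  have h2 := ltop_qfact (N-k).toNat
  have h3 := ltop_qfact N.toNat
  rw [Int.toNat_of_nonneg hk] at h1
  rw [Int.toNat_of_nonneg (by omega : (0:ℤ) ≤ N - k)] at h2
  rw [Int.toNat_of_nonneg hN] at h3
  rw [← hC N k hk hkN] at h3
  have h4 := ltop_cancel h2 h3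
  have h5 := ltop_cancel h1 h4
  convert h5 using 1
  rw [gdeg]; ring

/-- The 6j-symbol quotient `Δ(a,b,c,n,n,n)` is nonzero, has maximal degree
`g(m+1,σ+1) + g(x,m−p₁) + g(y,m−p₂) + g(w,m−p₃)`, and leading coefficient `±1`.
Here `C : ℤ → ℤ → ℤ[v,v⁻¹]` is the symmetric quantum binomial coefficient:
`C(N,k)·[k]!·[N−k]! = [N]!` for `0 ≤ k ≤ N`, and `C(N,k) = 0` for `k < 0` or `k > N`. -/
theorem sixj_quotient_degree (n a b c : ℤ) (hn : 1 ≤ n)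
    (ha : Even a) (hb : Even b) (hc : Even c)
    (ha0 : 0 ≤ a) (hb0 : 0 ≤ b) (hc0 : 0 ≤ c)
    (ha2 : a ≤ 2 * n) (hb2 : b ≤ 2 * n) (hc2 : c ≤ 2 * n)
    (htri1 : |a - b| ≤ c) (htri2 : c ≤ a + b)
    (C : ℤ → ℤ → LaurentPolynomial ℤ)
    (hC : ∀ N k : ℤ, 0 ≤ k → k ≤ N →
      C N k * qfact k.toNat * qfact (N - k).toNat = qfact N.toNat)
    (hC0 : ∀ N k : ℤ, k < 0 ∨ N < k → C N k = 0)
    (σ x y w p₁ p₂ p₃ m : ℤ)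
    (hσ : σ = (a + b + c) / 2) (hx : x = (-a + b + c) / 2)
    (hy : y = (a - b + c) / 2) (hw : w = (a + b - c) / 2)
    (hp₁ : p₁ = n + a / 2) (hp₂ : p₂ = n + b / 2) (hp₃ : p₃ = n + c / 2)
    (hm : m = n + (a + b + c - max a (max b c)) / 2)
    (Δ : LaurentPolynomial ℤ)
    (hΔ : Δ = ∑ z ∈ Finset.Icc (max (max σ p₁) (max p₂ p₃)) m,
      (if Even (z + σ) then (1 : LaurentPolynomial ℤ) else -1) *
        (C (z + 1) (σ + 1) * C x (z - p₁) * C y (z - p₂) * C w (z - p₃)))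
    (d : ℤ)
    (hd : d = gdeg (m + 1) (σ + 1) + gdeg x (m - p₁) + gdeg y (m - p₂) + gdeg w (m - p₃)) :
    Δ ≠ 0 ∧ Δ.coeff.support.max = (d : WithBot ℤ) ∧ (Δ.coeff d = 1 ∨ Δ.coeff d = -1) := by
  classical
  obtain ⟨A, hA⟩ := ha
  obtain ⟨B, hB⟩ := hb
  obtain ⟨Cc, hCc⟩ := hc
  obtain ⟨ht1, ht2⟩ := abs_le.mp htri1
  set Z₀ := max (max σ p₁) (max p₂ p₃) with hZ₀
  have hZm : Z₀ ≤ m := by omega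
  have hterm : ∀ z, Z₀ ≤ z → z ≤ m →
      LTop (C (z+1) (σ+1) * C x (z-p₁) * C y (z-p₂) * C w (z-p₃))
        (gdeg (z+1) (σ+1) + gdeg x (z-p₁) + gdeg y (z-p₂) + gdeg w (z-p₃)) := by
    intro z h1 h2
    have c1 := C_ltop C hC (z+1) (σ+1) (by omega) (by omega)
    have c2 := C_ltop C hC x (z-p₁) (by omega) (by omega)
    have c3 := C_ltop C hC y (z-p₂) (by omega) (by omega)
    have c4 := C_ltop C hC w (z-p₃) (by omega) (by omega)
    exact ltop_mul (ltop_mul (ltop_mul c1 c2) c3) c4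
  have hmono : ∀ z, Z₀ ≤ z → z ≤ m - 1 →
      gdeg (z+1) (σ+1) + gdeg x (z-p₁) + gdeg y (z-p₂) + gdeg w (z-p₃) < d := by
    intro z h1 h2
    have hxyw : x + y + w = σ := by omega
    have hppp : p₁ + p₂ + p₃ = 3*n + σ := by omega
    have hkey : d - (gdeg (z+1) (σ+1) + gdeg x (z-p₁) + gdeg y (z-p₂) + gdeg w (z-p₃))
        = 2*(m-z)*(4*σ+6*n+1-3*m-3*z) := by
      rw [hd]; simp only [gdeg]
      linear_combination (2*(m-z))*hxyw + (4*(m-z))*hppp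
    have hf2 : 0 < 4*σ+6*n+1-3*m-3*z := by omega
    nlinarith [mul_pos (by omega : (0:ℤ) < 2*(m-z)) hf2]
  have hsplit : Finset.Icc Z₀ m = insert m (Finset.Icc Z₀ (m-1)) := by
    ext z; simp only [Finset.mem_Icc, Finset.mem_insert]; omega
  rw [hsplit, Finset.sum_insert (by simp only [Finset.mem_Icc]; omega)] at hΔ
  have htm := hterm m hZm le_rfl
  rw [← hd] at htm
  have hterm_apply : ∀ (cond : Prop) [inst : Decidable cond] (P : LaurentPolynomial ℤ) (e : ℤ),
      ((if cond then (1:LaurentPolynomial ℤ) else -1) * P).coeff e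
        = (if cond then 1 else -1 : ℤ) * P.coeff e := by
    intro cond inst P e
    split_ifs with h
    · rw [one_mul, one_mul]
    · rw [neg_one_mul, neg_one_mul]
      rfl
  have hrest : ∀ e, d ≤ e → (∑ z ∈ Finset.Icc Z₀ (m-1),
      (if Even (z+σ) then (1:LaurentPolynomial ℤ) else -1) *
        (C (z+1) (σ+1) * C x (z-p₁) * C y (z-p₂) * C w (z-p₃))).coeff e = 0 := by
    intro e he
    rw [AddMonoidAlgebra.coeff_sum, Finsupp.finset_sum_apply]
    apply Finset.sum_eq_zero
    intro z hz
    rw [Finset.mem_Icc] at hz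
    rw [hterm_apply, (hterm z hz.1 (by omega)).1 e (lt_of_lt_of_le (hmono z hz.1 hz.2) he),
      mul_zero]
  have hΔd : Δ.coeff d = (if Even (m+σ) then 1 else -1 : ℤ) := by
    rw [hΔ, AddMonoidAlgebra.coeff_add, Finsupp.add_apply, hterm_apply, htm.2, mul_one, hrest d le_rfl, add_zero]
  have hΔgt : ∀ e, d < e → Δ.coeff e = 0 := by
    intro e he
    rw [hΔ, AddMonoidAlgebra.coeff_add, Finsupp.add_apply, hterm_apply, htm.1 e he, mul_zero, hrest e (le_of_lt he),
      add_zero]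
  have hΔdne : Δ.coeff d ≠ 0 := by
    rw [hΔd]; split_ifs <;> norm_num
  refine ⟨?_, ?_, ?_⟩
  · intro h
    rw [h] at hΔdne
    exact hΔdne (Finsupp.zero_apply)
  · apply le_antisymm
    · apply Finset.max_le
      intro e he
      rw [Finsupp.mem_support_iff] at he
      have : e ≤ d := by
        by_contra hgt
        push_neg at hgt
        exact he (hΔgt e hgt)
      exact_mod_cast this
    · exact Finset.le_max (Finsupp.mem_support_iff.mpr hΔdne)
  · rw [hΔd]
    split_ifs with h
    · left; rfl
    · right; rfl
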